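/- Let K be a field of characteristic zero and c₂, c₈, c₁₂, c₁₄, c₁₈, c₂₀, c₂₄, c₃₀ ∈ K. Then there is no rational function a ∈ K(X) satisfying X⁵ + a³ + a·(c₂X³ + c₈X² + c₁₄X + c₂₀) + c₁₂X³ + c₁₈X² + c₂₄X + c₃₀ = 0 in K(X). -/
import Mathlib

open Polynomial

/-- Degree argument: no polynomial solution. -/
lemma no_poly_solution {K : Type*} [Field K] (p q b : K[X])
    (hp : p.natDegree ≤ 3) (hq : q.natDegree ≤ 3)
    (h : X ^ 5 + b ^ 3 + b * p + q = 0) : False := by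
  by_cases hb : b = 0
  · subst hb
    have h5 := congrArg (fun f => Polynomial.coeff f 5) h
    simp only [coeff_add, coeff_X_pow, zero_pow, zero_mul, coeff_zero] at h5
    rw [coeff_eq_zero_of_natDegree_lt (lt_of_le_of_lt hq (by norm_num))] at h5
    norm_num at h5
  · set d := b.natDegree with hd
    rcases le_or_gt d 1 with hle | hgt
    · have h5 := congrArg (fun f => Polynomial.coeff f 5) h
      simp only [coeff_add, coeff_X_pow, coeff_zero] at h5
      rw [coeff_eq_zero_of_natDegree_lt (lt_of_le_of_lt hq (by norm_num)),
        coeff_eq_zero_of_natDegree_lt (lt_of_le_of_lt (natDegree_pow_le)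
          (by omega : 3 * d < 5)),
        coeff_eq_zero_of_natDegree_lt (lt_of_le_of_lt (natDegree_mul_le)
          (by omega : d + p.natDegree < 5))] at h5
      norm_num at h5
    · -- d ≥ 2
      have hdeg : (b ^ 3).natDegree = 3 * d := natDegree_pow' (by
        rw [← leadingCoeff_pow]; exact leadingCoeff_ne_zero.mpr (pow_ne_zero 3 hb))
      have hc := congrArg (fun f => Polynomial.coeff f (3 * d)) h
      simp only [coeff_add, coeff_X_pow, coeff_zero] at hc
      rw [coeff_eq_zero_of_natDegree_lt (lt_of_le_of_lt hq (by omega)),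
        coeff_eq_zero_of_natDegree_lt (lt_of_le_of_lt (natDegree_mul_le)
          (by omega : b.natDegree + p.natDegree < 3 * d)),
        if_neg (by omega : ¬ 3 * d = 5), ← hdeg, coeff_natDegree,
        leadingCoeff_pow] at hc
      exact hb (leadingCoeff_eq_zero.mp
        ((pow_eq_zero_iff (by norm_num : (3:ℕ) ≠ 0)).mp (by simpa using hc)))

theorem no_rational_solution_E8_fixed_points
    (K : Type*) [Field K] [CharZero K]
    (c₂ c₈ c₁₂ c₁₄ c₁₈ c₂₀ c₂₄ c₃₀ : K) :
    ¬ ∃ a : RatFunc K,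
      RatFunc.X ^ 5 + a ^ 3 +
        a * (RatFunc.C c₂ * RatFunc.X ^ 3 + RatFunc.C c₈ * RatFunc.X ^ 2 +
              RatFunc.C c₁₄ * RatFunc.X + RatFunc.C c₂₀) +
        (RatFunc.C c₁₂ * RatFunc.X ^ 3 + RatFunc.C c₁₈ * RatFunc.X ^ 2 +
          RatFunc.C c₂₄ * RatFunc.X + RatFunc.C c₃₀) = 0 := by
  rintro ⟨a, ha⟩
  set p : K[X] := C c₂ * X ^ 3 + C c₈ * X ^ 2 + C c₁₄ * X + C c₂₀ with hp
  set q : K[X] := C c₁₂ * X ^ 3 + C c₁₈ * X ^ 2 + C c₂₄ * X + C c₃₀ with hq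
  have hint : IsIntegral K[X] a := by
    refine ⟨X ^ 3 + (C p * X + C (X ^ 5 + q)), monic_X_pow_add ?_, ?_⟩
    · calc (C p * X + C (X ^ 5 + q)).degree ≤ max (C p * X).degree (C (X ^ 5 + q)).degree :=
          degree_add_le _ _
        _ < 3 := by
          apply max_lt
          · refine lt_of_le_of_lt (degree_mul_le _ _) (lt_of_le_of_lt
              (add_le_add degree_C_le degree_X_le) ?_)
            decide
          · exact lt_of_le_of_lt degree_C_le (by norm_num)
    · simp only [eval₂_add, eval₂_pow, eval₂_X, eval₂_mul, eval₂_C, hp, hq]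
      push_cast [map_add, map_mul, map_pow, RatFunc.algebraMap_C, RatFunc.algebraMap_X]
      linear_combination ha
  obtain ⟨b, hb⟩ := IsIntegrallyClosed.isIntegral_iff.mp hint
  apply no_poly_solution p q b ?_ ?_
  · apply IsFractionRing.injective K[X] (RatFunc K)
    push_cast [map_add, map_mul, map_pow, map_zero, hb, hp, hq,
      RatFunc.algebraMap_C, RatFunc.algebraMap_X]
    linear_combination ha
  · rw [hp]; compute_degree
  · rw [hq]; compute_degree
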